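/- Let a > 1 be an integer, c > 1 a real number, K ≥ 1, and set u_n = a^n - 1. Then the number of integers n ∈ (N/2, N] with s_{Kn}(u_n) > c^n is O_{a,c,K}(N / log N). -/

import Mathlib

open Finset

/-- The `y`-smooth part of `m` : the largest divisor of `m` all of whose
prime factors are at most `y`. -/
noncomputable def smoothPart (y : ℝ) (m : ℕ) : ℕ :=
  ∏ p ∈ m.primeFactors, p ^ (if (p : ℝ) ≤ y then m.factorization p else 0)

lemma emult_eq_fact {p n : ℕ} (hp : p.Prime) (hn : n ≠ 0) :
    emultiplicity p n = n.factorization p := by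
  rw [(Nat.finiteMultiplicity_iff.mpr ⟨hp.ne_one, Nat.pos_of_ne_zero hn⟩).emultiplicity_eq_multiplicity,
    Nat.multiplicity_eq_factorization hp hn]

lemma fact_le_of_dvd {m n : ℕ} (hm : m ≠ 0) (h : m ∣ n) (hn : n ≠ 0) (p : ℕ) :
    m.factorization p ≤ n.factorization p :=
  (Nat.factorization_le_iff_dvd hm hn).mpr h p

lemma key_lte {p a d n : ℕ} (hp : p.Prime) (ha : 2 ≤ a) (hpa : ¬ p ∣ a) (hd : 0 < d)
    (hpd : p ∣ a ^ d - 1) (hdn : d ∣ n) (hn : 0 < n) :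
    (a ^ n - 1).factorization p ≤ (a ^ (2 * d) - 1).factorization p + n.factorization p := by
  obtain ⟨m, rfl⟩ := hdn
  have hm : 0 < m := Nat.pos_of_ne_zero (by rintro rfl; simp at hn)
  set b := a ^ d with hb
  have hb2 : 2 ≤ b := ha.trans (Nat.le_self_pow hd.ne' a)
  have hpb : ¬ p ∣ b := fun h => hpa (hp.dvd_of_dvd_pow h)
  have hbm : a ^ (d * m) = b ^ m := by rw [hb, ← pow_mul]
  have hb2d : a ^ (2 * d) = b ^ 2 := by rw [hb, ← pow_mul, mul_comm]
  rw [hbm, hb2d]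
  have hbm0 : b ^ m - 1 ≠ 0 := by
    have : 2 ≤ b ^ m := hb2.trans (Nat.le_self_pow hm.ne' b); omega
  have hb20 : b ^ 2 - 1 ≠ 0 := by
    have : 2 ≤ b ^ 2 := hb2.trans (Nat.le_self_pow two_ne_zero b); omega
  have hb10 : b - 1 ≠ 0 := by omega
  have hn0 : d * m ≠ 0 := by positivity
  rcases hp.eq_two_or_odd' with hp2 | hodd
  · -- p = 2 case
    subst hp2
    have h2m0 : b ^ (2 * m) - 1 ≠ 0 := by
      have : 2 ≤ b ^ (2 * m) := hb2.trans (Nat.le_self_pow (by omega) b); omega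
    have hdvd1 : b ^ m - 1 ∣ b ^ (2 * m) - 1 := by
      have := Nat.sub_dvd_pow_sub_pow (b ^ m) 1 2
      simpa [← pow_mul, mul_comm m 2] using this
    refine (fact_le_of_dvd hbm0 hdvd1 h2m0 2).trans ?_
    have hb1 : (1:ℕ) ≤ b := by omega
    have hxy : (2 : ℤ) ∣ (b : ℤ) - 1 := by
      rw [← Nat.cast_one, ← Nat.cast_sub hb1]; exact_mod_cast hpd
    have hx : ¬ (2 : ℤ) ∣ (b : ℤ) := by exact_mod_cast hpb
    have h := Int.two_pow_sub_pow (x := (b : ℤ)) (y := 1) hxy hx (even_two_mul m)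
    have e1 : (b:ℤ) ^ (2*m) - 1 ^ (2*m) = ((b ^ (2*m) - 1 : ℕ) : ℤ) := by
      have h1 : 1 ≤ b ^ (2*m) := Nat.one_le_pow _ _ (by omega)
      push_cast [Nat.cast_sub h1]; ring
    have e2 : (b:ℤ) + 1 = ((b + 1 : ℕ) : ℤ) := by push_cast; ring
    have e3 : (b:ℤ) - 1 = ((b - 1 : ℕ) : ℤ) := by push_cast [Nat.cast_sub hb1]; ring
    rw [e1, e2, e3, show (2:ℤ) = ((2:ℕ):ℤ) from rfl, Int.natCast_emultiplicity,
      Int.natCast_emultiplicity, Int.natCast_emultiplicity, Int.natCast_emultiplicity] at h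
    have hbp0 : b + 1 ≠ 0 := by omega
    have h2m : (2 * m : ℕ) ≠ 0 := by omega
    rw [emult_eq_fact Nat.prime_two h2m0, emult_eq_fact Nat.prime_two hbp0,
      emult_eq_fact Nat.prime_two hb10, emult_eq_fact Nat.prime_two h2m] at h
    have hnat : (b ^ (2*m) - 1).factorization 2 + 1 =
        (b + 1).factorization 2 + (b - 1).factorization 2 + (2*m).factorization 2 := by
      exact_mod_cast h
    have hsq : b ^ 2 - 1 = (b + 1) * (b - 1) := by
      simpa using Nat.sq_sub_sq b 1
    have hv2 : (b ^ 2 - 1).factorization 2 =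
        (b + 1).factorization 2 + (b - 1).factorization 2 := by
      rw [hsq, Nat.factorization_mul hbp0 hb10]; simp
    have hv4 : (2*m).factorization 2 = 1 + m.factorization 2 := by
      rw [Nat.factorization_mul two_ne_zero hm.ne']
      simp [Nat.Prime.factorization_self Nat.prime_two]
    have hmn : m.factorization 2 ≤ (d * m).factorization 2 :=
      fact_le_of_dvd hm.ne' (dvd_mul_left m d) hn0 2
    omega
  · -- odd case
    have h := Nat.emultiplicity_pow_sub_pow hp hodd (x := b) (y := 1) (by simpa using hpd) hpb m
    simp only [one_pow] at h
    rw [emult_eq_fact hp hbm0, emult_eq_fact hp hb10,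
      emult_eq_fact hp hm.ne'] at h
    have h2 : (b ^ m - 1).factorization p = (b-1).factorization p + m.factorization p := by
      exact_mod_cast h
    rw [h2]
    have d1 : b - 1 ∣ b ^ 2 - 1 := by simpa using Nat.sub_dvd_pow_sub_pow b 1 2
    exact Nat.add_le_add (fact_le_of_dvd hb10 d1 hb20 p)
      (fact_le_of_dvd hm.ne' (dvd_mul_left m d) hn0 p)

lemma cheb {m : ℕ} (hm : 2 ≤ m) :
    (((Finset.range (m+1)).filter Nat.Prime).card : ℝ) ≤ 8 * m / Real.log m := by
  set s := Nat.sqrt m with hs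
  set P := (Finset.Ioc s m).filter Nat.Prime with hP
  have hlogm : 0 < Real.log m := Real.log_pos (by exact_mod_cast hm)
  -- card split
  have hsplit : ((Finset.range (m+1)).filter Nat.Prime).card ≤ (s + 1) + P.card := by
    have hsub : (Finset.range (m+1)).filter Nat.Prime ⊆
        ((Finset.range (s+1)).filter Nat.Prime) ∪ P := by
      intro p hp
      simp only [mem_filter, mem_range] at hp
      simp only [mem_union, mem_filter, mem_range, mem_Ioc, hP]
      rcases le_or_gt p s with h | h
      · exact Or.inl ⟨by omega, hp.2⟩
      · exact Or.inr ⟨⟨h, by omega⟩, hp.2⟩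
    calc ((Finset.range (m+1)).filter Nat.Prime).card
        ≤ _ := Finset.card_le_card hsub
      _ ≤ ((Finset.range (s+1)).filter Nat.Prime).card + P.card := Finset.card_union_le _ _
      _ ≤ (s + 1) + P.card := by
          gcongr
          exact (Finset.card_filter_le _ _).trans (by simp)
  -- (s+1)^k ≤ 4^m
  have hpow : (s + 1) ^ P.card ≤ 4 ^ m := by
    calc (s + 1) ^ P.card ≤ ∏ p ∈ P, p := by
          apply Finset.pow_card_le_prod
          intro p hp
          simp only [hP, mem_filter, mem_Ioc] at hp
          omega
      _ ≤ primorial m := by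
          apply Nat.le_of_dvd (primorial_pos m)
          apply Finset.prod_dvd_prod_of_subset
          intro p hp
          simp only [hP, mem_filter, mem_Ioc, mem_range] at hp ⊢
          refine ⟨by omega, hp.2⟩
      _ ≤ 4 ^ m := primorial_le_4_pow m
  -- real versions
  have hsq : (m : ℝ) ≤ ((s:ℝ) + 1) ^ 2 := by
    have h' : m ≤ (s+1)*(s+1) := by
      have := Nat.lt_succ_sqrt m
      simp only [Nat.succ_eq_add_one] at this
      exact this.le
    have h2 : (m:ℝ) ≤ ((s:ℝ)+1)*((s:ℝ)+1) := by exact_mod_cast h'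
    nlinarith
  have hs1pos : (0:ℝ) < (s:ℝ) + 1 := by positivity
  have hlogs : Real.log m ≤ 2 * Real.log ((s:ℝ) + 1) := by
    calc Real.log m ≤ Real.log (((s:ℝ)+1)^2) := Real.log_le_log (by positivity) hsq
      _ = 2 * Real.log ((s:ℝ)+1) := by rw [Real.log_pow]; push_cast; ring
  have hklog : (P.card : ℝ) * Real.log ((s:ℝ)+1) ≤ m * Real.log 4 := by
    have := Real.log_le_log (by positivity : (0:ℝ) < ((s+1:ℕ):ℝ) ^ P.card)
      (by exact_mod_cast hpow : (((s+1:ℕ):ℝ) ^ P.card) ≤ ((4:ℕ):ℝ) ^ m)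
    rw [Real.log_pow, Real.log_pow] at this
    push_cast at this ⊢
    linarith
  have hk : (P.card : ℝ) * Real.log m ≤ 2 * m * Real.log 4 := by
    calc (P.card : ℝ) * Real.log m ≤ (P.card : ℝ) * (2 * Real.log ((s:ℝ)+1)) := by
          gcongr
      _ = 2 * ((P.card : ℝ) * Real.log ((s:ℝ)+1)) := by ring
      _ ≤ 2 * (m * Real.log 4) := by gcongr
      _ = 2 * m * Real.log 4 := by ring
  -- s+1 ≤ 2 sqrt m, log m ≤ 2 sqrt m
  have hsrt : ((s:ℝ) + 1) ≤ 2 * Real.sqrt m := by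
    have h1 : (s:ℝ) ≤ Real.sqrt m := by
      rw [Real.le_sqrt (by positivity) (by positivity)]
      exact_mod_cast Nat.sqrt_le' m
    have h2 : (1:ℝ) ≤ Real.sqrt m := by
      rw [Real.le_sqrt (by positivity) (by positivity)]
      norm_num
      exact_mod_cast le_trans (by norm_num) hm
    linarith
  have hlogsqrt : Real.log m ≤ 2 * Real.sqrt m := by
    have h0 : (0:ℝ) < Real.sqrt m := by positivity
    have := Real.log_le_sub_one_of_pos h0
    have hsq2 : Real.log m = 2 * Real.log (Real.sqrt m) := by
      rw [Real.log_sqrt (by positivity)]; ring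
    rw [hsq2]; linarith
  have hmpos : (0:ℝ) < m := by positivity
  have hs1 : ((s:ℝ) + 1) * Real.log m ≤ 4 * m := by
    calc ((s:ℝ) + 1) * Real.log m ≤ (2 * Real.sqrt m) * (2 * Real.sqrt m) := by
          apply mul_le_mul hsrt hlogsqrt hlogm.le (by positivity)
      _ = 4 * (Real.sqrt m * Real.sqrt m) := by ring
      _ = 4 * m := by rw [Real.mul_self_sqrt hmpos.le]
  -- combine
  have hlog2 : Real.log 4 ≤ 2 := by
    have h2 : Real.log 2 ≤ 1 := by
      have := Real.log_le_sub_one_of_pos (by norm_num : (0:ℝ) < 2)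
      linarith
    have : Real.log 4 = 2 * Real.log 2 := by
      rw [show (4:ℝ) = 2^2 by norm_num, Real.log_pow]; push_cast; ring
    linarith
  rw [le_div_iff₀ hlogm]
  calc (((Finset.range (m+1)).filter Nat.Prime).card : ℝ) * Real.log m
      ≤ (((s:ℝ) + 1) + P.card) * Real.log m := by
        gcongr
        exact_mod_cast hsplit
    _ = ((s:ℝ)+1) * Real.log m + (P.card : ℝ) * Real.log m := by ring
    _ ≤ 4 * m + 2 * m * Real.log 4 := by linarith
    _ ≤ 4 * m + 2 * m * 2 := by gcongr
    _ = 8 * m := by ring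

lemma per_prime {a p : ℕ} (ha : 2 ≤ a) (hp : p.Prime) (N : ℝ) (hN : 2 ≤ N) :
    Real.log p * ∑ n ∈ Finset.Ioc ⌊N/2⌋₊ ⌊N⌋₊, (((a ^ n - 1).factorization p : ℝ)) ≤
      3 * Real.log a * N := by
  have hNpos : (0:ℝ) < N := by linarith
  have hla : (0:ℝ) ≤ Real.log a := Real.log_nonneg (by exact_mod_cast le_trans one_le_two ha)
  have hlp : (0:ℝ) ≤ Real.log p := Real.log_nonneg (by exact_mod_cast hp.one_lt.le)
  set I := Finset.Ioc ⌊N/2⌋₊ ⌊N⌋₊ with hI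
  have hIpos : ∀ n ∈ I, 0 < n := fun n hn => by
    simp only [hI, mem_Ioc] at hn; omega
  by_cases hpa : p ∣ a
  · -- p divides a: all terms vanish
    have hzero : ∀ n ∈ I, ((a ^ n - 1).factorization p : ℝ) = 0 := by
      intro n hn
      have h1 : ¬ p ∣ a ^ n - 1 := by
        intro hdvd
        have hpan : p ∣ a ^ n := dvd_pow hpa (hIpos n hn).ne'
        have h1n : 1 ≤ a ^ n := Nat.one_le_pow _ _ (by omega)
        have : p ∣ a ^ n - (a ^ n - 1) := Nat.dvd_sub hpan hdvd
        rw [show a ^ n - (a ^ n - 1) = 1 by omega] at this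
        exact Nat.Prime.one_lt hp |>.ne' (Nat.dvd_one.mp this)
      rw [Nat.factorization_eq_zero_of_not_dvd h1]; norm_num
    rw [Finset.sum_congr rfl hzero]
    simp
    positivity
  · haveI : Fact p.Prime := ⟨hp⟩
    have ha0 : (a : ZMod p) ≠ 0 := by
      simpa [ZMod.natCast_eq_zero_iff] using hpa
    set d := orderOf (a : ZMod p) with hdd
    have hfin : IsOfFinOrder (a : ZMod p) := by
      refine isOfFinOrder_iff_pow_eq_one.mpr ⟨p - 1, by have := hp.two_le; omega, ?_⟩
      exact ZMod.pow_card_sub_one_eq_one ha0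
    have hd : 0 < d := orderOf_pos_iff.mpr hfin
    have hdvd : ∀ n : ℕ, p ∣ a ^ n - 1 ↔ d ∣ n := by
      intro n
      have h1n : 1 ≤ a ^ n := Nat.one_le_pow _ _ (by omega)
      rw [← ZMod.natCast_eq_zero_iff, Nat.cast_sub h1n]
      push_cast
      rw [sub_eq_zero]
      constructor
      · intro h
        exact orderOf_dvd_of_pow_eq_one h
      · intro h
        exact orderOf_dvd_iff_pow_eq_one.mp (hdd ▸ h)
    have hpd : p ∣ a ^ d - 1 := (hdvd d).mpr dvd_rfl
    set v2d := (a ^ (2 * d) - 1).factorization p with hv2d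
    -- reduce sum to multiples of d
    have hsum1 : ∑ n ∈ I, ((a ^ n - 1).factorization p : ℝ) =
        ∑ n ∈ I.filter (fun n => d ∣ n), ((a ^ n - 1).factorization p : ℝ) := by
      rw [Finset.sum_filter_of_ne]
      intro n _ hne
      refine (hdvd n).mp (Nat.dvd_of_factorization_pos ?_)
      exact fun h => hne (by rw [h]; norm_num)
    have hsum2 : ∑ n ∈ I.filter (fun n => d ∣ n), ((a ^ n - 1).factorization p : ℝ) ≤
        ∑ n ∈ I.filter (fun n => d ∣ n), ((v2d : ℝ) + (n.factorization p : ℝ)) := by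
      apply Finset.sum_le_sum
      intro n hn
      simp only [Finset.mem_filter] at hn
      have := key_lte hp ha hpa hd hpd hn.2 (hIpos n hn.1)
      push_cast
      exact_mod_cast this
    have hcard : ((I.filter (fun n => d ∣ n)).card : ℝ) ≤ N / d := by
      have hsub : I.filter (fun n => d ∣ n) ⊆ (Finset.Ioc 0 ⌊N⌋₊).filter (fun n => d ∣ n) :=
        Finset.filter_subset_filter _ (Finset.Ioc_subset_Ioc (Nat.zero_le _) le_rfl)
      have h1 : (I.filter (fun n => d ∣ n)).card ≤ ⌊N⌋₊ / d := by
        rw [← Nat.Ioc_filter_dvd_card_eq_div]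
        exact Finset.card_le_card hsub
      calc ((I.filter (fun n => d ∣ n)).card : ℝ) ≤ ((⌊N⌋₊ / d : ℕ) : ℝ) := by exact_mod_cast h1
        _ ≤ (⌊N⌋₊ : ℝ) / (d : ℝ) := Nat.cast_div_le
        _ ≤ N / d := by
            gcongr
            · exact Nat.floor_le hNpos.le
    set F := I.filter (fun n => d ∣ n) with hF
    set W := ∑ n ∈ F, (n.factorization p : ℝ) with hW
    have hM1 : (⌊N⌋₊ : ℝ) ≤ N := Nat.floor_le hNpos.le
    have hp1 : (1:ℝ) < (p:ℝ) := by exact_mod_cast hp.one_lt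
    -- bound on v2d * log p
    have hv2dlog : (v2d : ℝ) * Real.log p ≤ 2 * d * Real.log a := by
      have hpos : 0 < a ^ (2 * d) - 1 := by
        have : 1 < a ^ (2 * d) := Nat.one_lt_pow (by omega) (by omega)
        omega
      have hdvd2 : p ^ v2d ∣ a ^ (2 * d) - 1 := Nat.ordProj_dvd _ p
      have hle : p ^ v2d ≤ a ^ (2 * d) := (Nat.le_of_dvd hpos hdvd2).trans (by omega)
      have hlog := Real.log_le_log (by exact_mod_cast pow_pos hp.pos v2d : (0:ℝ) < ((p ^ v2d : ℕ) : ℝ))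
        (by exact_mod_cast hle : ((p ^ v2d : ℕ) : ℝ) ≤ ((a ^ (2 * d) : ℕ) : ℝ))
      rw [show ((p ^ v2d : ℕ) : ℝ) = ((p:ℝ)) ^ v2d by push_cast; ring,
        show ((a ^ (2 * d) : ℕ) : ℝ) = ((a:ℝ)) ^ (2 * d) by push_cast; ring,
        Real.log_pow, Real.log_pow] at hlog
      calc (v2d : ℝ) * Real.log p ≤ ((2 * d : ℕ) : ℝ) * Real.log a := hlog
        _ = 2 * d * Real.log a := by push_cast; ring
    -- bound on W * log p
    have hWlog : W * Real.log p ≤ N * Real.log a := by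
      have hFsub : F ⊆ Finset.Ico 1 (⌊N⌋₊ + 1) := by
        intro n hn
        simp only [hF, Finset.mem_filter, hI, Finset.mem_Ioc] at hn
        simp only [Finset.mem_Ico]
        omega
      have hWnat : ∑ n ∈ F, n.factorization p ≤ (Nat.factorial ⌊N⌋₊).factorization p := by
        calc ∑ n ∈ F, n.factorization p ≤ ∑ n ∈ Finset.Ico 1 (⌊N⌋₊ + 1), n.factorization p :=
              Finset.sum_le_sum_of_subset hFsub
          _ = (Nat.factorial ⌊N⌋₊).factorization p := by
              rw [← Finset.prod_Ico_id_eq_factorial,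
                Nat.factorization_prod (fun i hi => by
                  simp only [Finset.mem_Ico] at hi; omega)]
              rw [Finset.sum_apply']
      have hLeg : (Nat.factorial ⌊N⌋₊).factorization p ≤ ⌊N⌋₊ / (p - 1) := by
        have h1 := hp.emultiplicity_factorial_le_div_pred ⌊N⌋₊
        rw [emult_eq_fact hp (Nat.factorial_ne_zero _)] at h1
        exact_mod_cast h1
      have hWle : W ≤ (⌊N⌋₊ : ℝ) / ((p:ℝ) - 1) := by
        have hWcast : W = ((∑ n ∈ F, n.factorization p : ℕ) : ℝ) := (Nat.cast_sum F _).symm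
        calc W ≤ ((⌊N⌋₊ / (p - 1) : ℕ) : ℝ) := by
              rw [hWcast]; exact_mod_cast hWnat.trans hLeg
          _ ≤ (⌊N⌋₊ : ℝ) / (((p - 1 : ℕ)) : ℝ) := Nat.cast_div_le
          _ = (⌊N⌋₊ : ℝ) / ((p:ℝ) - 1) := by
              congr 1
              have := hp.two_le
              push_cast [Nat.cast_sub (by omega : 1 ≤ p)]
              ring
      have hlogp2 : Real.log p ≤ ((p:ℝ) - 1) * Real.log 2 := by
        have h2 : p ≤ 2 ^ (p - 1) := by
          have := Nat.lt_two_pow_self (n := p - 1)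
          have := hp.two_le
          omega
        calc Real.log p ≤ Real.log ((2 : ℝ) ^ (p - 1)) := by
              apply Real.log_le_log (by positivity)
              exact_mod_cast h2
          _ = ((p - 1 : ℕ) : ℝ) * Real.log 2 := by rw [Real.log_pow]
          _ = ((p:ℝ) - 1) * Real.log 2 := by
              have := hp.two_le
              push_cast [Nat.cast_sub (by omega : 1 ≤ p)]
              ring
      have hWnn : 0 ≤ W := Finset.sum_nonneg fun i _ => by positivity
      have hpne : ((p:ℝ) - 1) ≠ 0 := by linarith
      calc W * Real.log p ≤ ((⌊N⌋₊ : ℝ) / ((p:ℝ) - 1)) * (((p:ℝ) - 1) * Real.log 2) := by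
            apply mul_le_mul hWle hlogp2 hlp
              (div_nonneg (Nat.cast_nonneg _) (by linarith))
        _ = (⌊N⌋₊ : ℝ) * Real.log 2 := by
            field_simp
        _ ≤ N * Real.log a := by
            apply mul_le_mul hM1 ?_ (Real.log_nonneg one_le_two) hNpos.le
            apply Real.log_le_log (by norm_num)
            exact_mod_cast ha
    -- assemble
    have hsum3 : ∑ n ∈ F, ((v2d : ℝ) + (n.factorization p : ℝ)) = (F.card : ℝ) * v2d + W := by
      rw [Finset.sum_add_distrib, Finset.sum_const, nsmul_eq_mul]
    have hAd : (N / (d:ℝ)) * (2 * d * Real.log a) = 2 * N * Real.log a := by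
      have hd0 : (d:ℝ) ≠ 0 := by positivity
      field_simp
    have hA : (F.card : ℝ) * ((v2d:ℝ) * Real.log p) ≤ 2 * N * Real.log a := by
      rw [← hAd]
      apply mul_le_mul hcard hv2dlog (by positivity) (by positivity)
    rw [hsum1]
    calc Real.log p * ∑ n ∈ F, ((a ^ n - 1).factorization p : ℝ)
        ≤ Real.log p * ∑ n ∈ F, ((v2d : ℝ) + (n.factorization p : ℝ)) :=
          mul_le_mul_of_nonneg_left hsum2 hlp
      _ = (F.card : ℝ) * ((v2d:ℝ) * Real.log p) + W * Real.log p := by rw [hsum3]; ring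
      _ ≤ 2 * N * Real.log a + N * Real.log a := add_le_add hA hWlog
      _ = 3 * Real.log a * N := by ring

lemma smoothPart_pos (y : ℝ) (m : ℕ) : 0 < smoothPart y m := by
  apply Finset.prod_pos
  intro p hp
  exact pow_pos (Nat.prime_of_mem_primeFactors hp).pos _

lemma smoothPart_le_prod {y : ℝ} {m : ℕ} (Q : Finset ℕ)
    (hQ0 : ∀ p ∈ Q, p ≠ 0)
    (hQ : ∀ p ∈ m.primeFactors, (p:ℝ) ≤ y → p ∈ Q) :
    smoothPart y m ≤ ∏ p ∈ Q, p ^ m.factorization p := by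
  rw [smoothPart]
  have h1 : ∀ p ∈ m.primeFactors,
      p ^ (if (p : ℝ) ≤ y then m.factorization p else 0) =
      (if (p : ℝ) ≤ y then p ^ m.factorization p else 1) := by
    intro p _; split <;> simp
  rw [Finset.prod_congr rfl h1, ← Finset.prod_filter]
  apply Finset.prod_le_prod_of_subset_of_one_le'
  · intro p hp
    simp only [Finset.mem_filter] at hp
    exact hQ p hp.1 hp.2
  · intro p hp _
    exact Nat.one_le_pow _ _ (Nat.pos_of_ne_zero (hQ0 p hp))

lemma log_smoothPart_le {y : ℝ} {m : ℕ} (Q : Finset ℕ)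
    (hQp : ∀ p ∈ Q, Nat.Prime p)
    (hQ : ∀ p ∈ m.primeFactors, (p:ℝ) ≤ y → p ∈ Q) :
    Real.log (smoothPart y m) ≤ ∑ p ∈ Q, (m.factorization p : ℝ) * Real.log p := by
  have h1 : smoothPart y m ≤ ∏ p ∈ Q, p ^ m.factorization p :=
    smoothPart_le_prod Q (fun p hp => (hQp p hp).pos.ne') hQ
  calc Real.log (smoothPart y m) ≤ Real.log ((∏ p ∈ Q, p ^ m.factorization p : ℕ) : ℝ) := by
        apply Real.log_le_log (by exact_mod_cast smoothPart_pos y m)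
        exact_mod_cast h1
    _ = ∑ p ∈ Q, (m.factorization p : ℝ) * Real.log p := by
        rw [Nat.cast_prod]
        rw [Real.log_prod (fun p hp => by
          have := (hQp p hp).pos
          positivity)]
        apply Finset.sum_congr rfl
        intro p hp
        rw [show ((p ^ m.factorization p : ℕ) : ℝ) = (p:ℝ) ^ m.factorization p by push_cast; ring,
          Real.log_pow]

theorem card_smooth_exceptional_interval
    (a : ℕ) (ha : 1 < a) (c : ℝ) (hc : 1 < c) (K : ℝ) (hK : 1 ≤ K) :
    ∃ C > 0, ∀ N : ℝ, 2 ≤ N →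
      (((Finset.Ioc ⌊N / 2⌋₊ ⌊N⌋₊).filter
          (fun n : ℕ => (c : ℝ) ^ n < (smoothPart (K * (n : ℝ)) (a ^ n - 1) : ℝ))).card : ℝ) ≤
        C * N / Real.log N := by
  have ha2 : 2 ≤ a := ha
  have hlc : 0 < Real.log c := Real.log_pos hc
  have hla : 0 < Real.log a := Real.log_pos (by exact_mod_cast ha)
  have hK0 : 0 < K := lt_of_lt_of_le one_pos hK
  refine ⟨96 * K * Real.log a / Real.log c + 2, by positivity, ?_⟩
  intro N hN
  set C1 := 96 * K * Real.log a / Real.log c with hC1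
  have hC1nn : 0 ≤ C1 := by positivity
  have hNpos : (0:ℝ) < N := by linarith
  have hlogN : 0 < Real.log N := Real.log_pos (by linarith)
  set I := Finset.Ioc ⌊N / 2⌋₊ ⌊N⌋₊ with hI
  set E := I.filter
      (fun n : ℕ => (c : ℝ) ^ n < (smoothPart (K * (n : ℝ)) (a ^ n - 1) : ℝ)) with hE
  rw [div_eq_mul_inv, ← div_eq_mul_inv, le_div_iff₀ hlogN]
  by_cases hN4 : N < 4
  · -- small N
    have h1 : (E.card : ℝ) ≤ N := by
      have hc1 : E.card ≤ I.card := Finset.card_filter_le _ _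
      have hc2 : I.card ≤ ⌊N⌋₊ := by
        rw [hI, Nat.card_Ioc]; omega
      calc (E.card : ℝ) ≤ (⌊N⌋₊ : ℝ) := by exact_mod_cast hc1.trans hc2
        _ ≤ N := Nat.floor_le hNpos.le
    have hlogN4 : Real.log N ≤ 2 := by
      have h2 : Real.log 2 ≤ 1 := by
        have := Real.log_le_sub_one_of_pos (by norm_num : (0:ℝ) < 2); linarith
      have h4 : Real.log 4 = 2 * Real.log 2 := by
        rw [show (4:ℝ) = 2^2 by norm_num, Real.log_pow]; push_cast; ring
      calc Real.log N ≤ Real.log 4 := Real.log_le_log hNpos (by linarith)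
        _ ≤ 2 := by rw [h4]; linarith
    calc (E.card : ℝ) * Real.log N ≤ N * 2 :=
          mul_le_mul h1 hlogN4 hlogN.le hNpos.le
      _ ≤ (C1 + 2) * N := by nlinarith
  · push_neg at hN4
    set M := ⌊K * N⌋₊ with hM
    set Q := (Finset.range (M+1)).filter Nat.Prime with hQ
    have hQp : ∀ p ∈ Q, Nat.Prime p := fun p hp => (Finset.mem_filter.mp hp).2
    -- step 1 : small lower bound on log smoothPart for n ∈ E
    have h1 : ∀ n ∈ E, N/2 * Real.log c ≤ Real.log ((smoothPart (K * n) (a ^ n - 1) : ℕ) : ℝ) := by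
      intro n hn
      rw [hE, Finset.mem_filter] at hn
      obtain ⟨hnI, hns⟩ := hn
      rw [hI, Finset.mem_Ioc] at hnI
      have hn2 : N/2 < (n:ℝ) := by
        calc N/2 < (⌊N/2⌋₊ : ℝ) + 1 := Nat.lt_floor_add_one _
          _ ≤ (n:ℝ) := by exact_mod_cast hnI.1
      calc N/2 * Real.log c ≤ (n:ℝ) * Real.log c :=
            mul_le_mul_of_nonneg_right hn2.le hlc.le
        _ = Real.log (c ^ n) := by rw [Real.log_pow]
        _ ≤ Real.log ((smoothPart (K * n) (a ^ n - 1) : ℕ) : ℝ) :=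
            Real.log_le_log (by positivity) hns.le
    have h2 : (E.card : ℝ) * (N/2 * Real.log c) ≤
        ∑ n ∈ E, Real.log ((smoothPart (K * n) (a ^ n - 1) : ℕ) : ℝ) := by
      have := Finset.card_nsmul_le_sum E
        (fun n => Real.log ((smoothPart (K * n) (a ^ n - 1) : ℕ) : ℝ)) (N/2 * Real.log c) h1
      rwa [nsmul_eq_mul] at this
    have h3 : ∑ n ∈ E, Real.log ((smoothPart (K * n) (a ^ n - 1) : ℕ) : ℝ) ≤
        ∑ n ∈ I, Real.log ((smoothPart (K * n) (a ^ n - 1) : ℕ) : ℝ) := by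
      apply Finset.sum_le_sum_of_subset_of_nonneg (Finset.filter_subset _ _)
      intro n _ _
      apply Real.log_nonneg
      exact_mod_cast smoothPart_pos (K * n) (a ^ n - 1)
    have h4 : ∑ n ∈ I, Real.log ((smoothPart (K * n) (a ^ n - 1) : ℕ) : ℝ) ≤
        ∑ n ∈ I, ∑ p ∈ Q, ((a ^ n - 1).factorization p : ℝ) * Real.log p := by
      apply Finset.sum_le_sum
      intro n hn
      rw [hI, Finset.mem_Ioc] at hn
      apply log_smoothPart_le Q hQp
      intro p hp hpy
      rw [hQ, Finset.mem_filter, Finset.mem_range]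
      refine ⟨?_, Nat.prime_of_mem_primeFactors hp⟩
      have hnN : (n : ℝ) ≤ N := le_trans (by exact_mod_cast hn.2) (Nat.floor_le hNpos.le)
      have : (p : ℝ) ≤ K * N := le_trans hpy (by nlinarith)
      have := Nat.le_floor this
      omega
    have h5 : ∑ n ∈ I, ∑ p ∈ Q, ((a ^ n - 1).factorization p : ℝ) * Real.log p =
        ∑ p ∈ Q, Real.log p * ∑ n ∈ I, ((a ^ n - 1).factorization p : ℝ) := by
      rw [Finset.sum_comm]
      apply Finset.sum_congr rfl
      intro p _
      rw [Finset.mul_sum]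
      apply Finset.sum_congr rfl
      intro n _
      ring
    have h6 : ∑ p ∈ Q, Real.log p * ∑ n ∈ I, ((a ^ n - 1).factorization p : ℝ) ≤
        (Q.card : ℝ) * (3 * Real.log a * N) := by
      have := Finset.sum_le_card_nsmul Q
        (fun p => Real.log p * ∑ n ∈ I, ((a ^ n - 1).factorization p : ℝ))
        (3 * Real.log a * N)
        (fun p hp => per_prime ha2 (hQp p hp) N hN)
      rwa [nsmul_eq_mul] at this
    have hmain : (E.card : ℝ) * (N/2 * Real.log c) ≤ (Q.card : ℝ) * (3 * Real.log a * N) :=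
      le_trans h2 (le_trans h3 (le_trans h4 (le_trans (le_of_eq h5) h6)))
    -- chebyshev bound on Q.card * log N
    have hMfloor : ⌊N⌋₊ ≤ M := Nat.floor_le_floor (le_mul_of_one_le_left hNpos.le hK)
    have hN4' : (4:ℕ) ≤ ⌊N⌋₊ := Nat.le_floor (by exact_mod_cast hN4)
    have hM2 : 2 ≤ M := by omega
    have hMN : (M:ℝ) ≤ K * N := Nat.floor_le (by positivity)
    have hM1 : (1:ℝ) < (M:ℝ) := by exact_mod_cast hM2
    have hlogM : 0 < Real.log M := Real.log_pos hM1
    have hNM2 : N ≤ (M:ℝ) * (M:ℝ) := by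
      have h1 : N - 1 < (⌊N⌋₊ : ℝ) := Nat.sub_one_lt_floor N
      have h2 : (⌊N⌋₊ : ℝ) ≤ (M : ℝ) := by exact_mod_cast hMfloor
      nlinarith
    have hlogNM : Real.log N ≤ 2 * Real.log M := by
      calc Real.log N ≤ Real.log ((M:ℝ) * M) := Real.log_le_log hNpos hNM2
        _ = Real.log M + Real.log M := Real.log_mul (by positivity) (by positivity)
        _ = 2 * Real.log M := by ring
    have hQcard : (Q.card : ℝ) * Real.log N ≤ 16 * K * N := by
      have hch := cheb hM2
      have hch' : (Q.card : ℝ) * Real.log M ≤ 8 * M := by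
        rw [le_div_iff₀ hlogM] at hch; exact hch
      calc (Q.card : ℝ) * Real.log N ≤ (Q.card : ℝ) * (2 * Real.log M) := by
            apply mul_le_mul_of_nonneg_left hlogNM (Nat.cast_nonneg _)
        _ = 2 * ((Q.card : ℝ) * Real.log M) := by ring
        _ ≤ 2 * (8 * M) := by linarith
        _ ≤ 16 * (K * N) := by linarith
        _ = 16 * K * N := by ring
    -- combine
    have hhalf : 0 < N/2 * Real.log c := by positivity
    have hbig : (E.card : ℝ) * Real.log N * (N/2 * Real.log c) ≤
        48 * K * Real.log a * N^2 := by
      calc (E.card : ℝ) * Real.log N * (N/2 * Real.log c)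
          = ((E.card : ℝ) * (N/2 * Real.log c)) * Real.log N := by ring
        _ ≤ ((Q.card : ℝ) * (3 * Real.log a * N)) * Real.log N :=
            mul_le_mul_of_nonneg_right hmain hlogN.le
        _ = ((Q.card : ℝ) * Real.log N) * (3 * Real.log a * N) := by ring
        _ ≤ (16 * K * N) * (3 * Real.log a * N) :=
            mul_le_mul_of_nonneg_right hQcard (by positivity)
        _ = 48 * K * Real.log a * N^2 := by ring
    have hfin : (E.card : ℝ) * Real.log N ≤ C1 * N := by
      rw [show C1 * N = 48 * K * Real.log a * N^2 / (N/2 * Real.log c) by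
        rw [hC1]; field_simp; ring]
      rw [le_div_iff₀ hhalf]
      exact hbig
    calc (E.card : ℝ) * Real.log N ≤ C1 * N := hfin
      _ ≤ (C1 + 2) * N := by nlinarith
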